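/- Let A and B be unitary operators on complex Hilbert spaces H_A and H_B. If A ≈ B (that is, there exist linear isometries Ω : H_A → H_B and Ω' : H_B → H_A with Ω∘A = B∘Ω and Ω'∘B = A∘Ω'), then A and B are unitarily equivalent, i.e., there is a unitary operator W : H_A → H_B with W∘A = B∘W. -/

import Mathlib

open ContinuousLinearMap
open scoped InnerProductSpace

noncomputable section CSBaux

variable {H : Type*} [NormedAddCommGroup H] [InnerProductSpace ℂ H]

/-- iterate of a linear isometry -/
def isoPow (S : H →ₗᵢ[ℂ] H) : ℕ → (H →ₗᵢ[ℂ] H)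
  | 0 => .id
  | n + 1 => S.comp (isoPow S n)

lemma isoPow_zero (S : H →ₗᵢ[ℂ] H) (x : H) : isoPow S 0 x = x := rfl

lemma isoPow_succ (S : H →ₗᵢ[ℂ] H) (n : ℕ) (x : H) :
    isoPow S (n + 1) x = S (isoPow S n x) := rfl

lemma isoPow_comm (S : H →ₗᵢ[ℂ] H) (n : ℕ) (x : H) :
    isoPow S n (S x) = S (isoPow S n x) := by
  induction n with
  | zero => rfl
  | succ n ih => rw [isoPow_succ, isoPow_succ, ih]

lemma proj_step [CompleteSpace H] (x : H) (K L : Submodule ℂ H) (hK : IsClosed ((K : Set H)))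
    (hKL : K ≤ L) (hxL : x ∈ L)
    (hm : ∀ m, m ∈ L → m ∈ Kᗮ → ⟪m, x⟫_ℂ = 0) : x ∈ K := by
  haveI : CompleteSpace K := hK.completeSpace_coe
  set p : H := (Submodule.orthogonalProjectionOnto K x : H) with hp
  have hpK : p ∈ K := (Submodule.orthogonalProjectionOnto K x).2
  have he : x - p ∈ Kᗮ := Submodule.sub_starProjection_mem_orthogonal x
  have heL : x - p ∈ L := L.sub_mem hxL (hKL hpK)
  have h0 : ⟪x - p, x⟫_ℂ = 0 := hm _ heL he
  have h1 : ⟪x - p, p⟫_ℂ = 0 := inner_eq_zero_symm.mp (he p hpK)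
  have h2 : ⟪x - p, x - p⟫_ℂ = 0 := by rw [inner_sub_right, h0, h1, sub_zero]
  have h3 : x = p := sub_eq_zero.mp (inner_self_eq_zero.mp h2)
  rw [h3]; exact hpK

/-- The key chain lemma: if `x` is orthogonal to all the successive differences of an
interleaved decreasing chain of closed subspaces, and to the intersection, then `x = 0`. -/
lemma chain_lemma [CompleteSpace H] (D G : ℕ → Submodule ℂ H)
    (hDc : ∀ n, IsClosed ((D n : Set H))) (hGc : ∀ n, IsClosed ((G n : Set H)))
    (hGD : ∀ n, G n ≤ D n) (hDG : ∀ n, D (n + 1) ≤ G n)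
    (x : H) (hx0 : x ∈ D 0)
    (hM : ∀ n, ∀ m, m ∈ D n → m ∈ (G n)ᗮ → ⟪m, x⟫_ℂ = 0)
    (hN : ∀ n, ∀ m, m ∈ G n → m ∈ (D (n + 1))ᗮ → ⟪m, x⟫_ℂ = 0)
    (hI : ∀ y, (∀ n, y ∈ D n) → ⟪y, x⟫_ℂ = 0) :
    x = 0 := by
  have main : ∀ n, x ∈ D n := by
    intro n
    induction n with
    | zero => exact hx0
    | succ n ih =>
      have hxG : x ∈ G n := proj_step x (G n) (D n) (hGc n) (hGD n) ih (hM n)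
      exact proj_step x (D (n + 1)) (G n) (hDc (n + 1)) (hDG n) hxG (hN n)
  have := hI x main
  rwa [inner_self_eq_zero] at this

end CSBaux

set_option maxHeartbeats 2000000 in
/-- If `A` and `B` are unitary operators and `A ≈ B` (there are intertwining linear isometries
in both directions), then `A` and `B` are unitarily equivalent. -/
theorem stmt_9
    {HA HB : Type*}
    [NormedAddCommGroup HA] [InnerProductSpace ℂ HA] [CompleteSpace HA]
    [NormedAddCommGroup HB] [InnerProductSpace ℂ HB] [CompleteSpace HB]
    (A : HA →L[ℂ] HA) (hAu : A ∈ unitary (HA →L[ℂ] HA))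
    (B : HB →L[ℂ] HB) (hBu : B ∈ unitary (HB →L[ℂ] HB))
    (Ω : HA →ₗᵢ[ℂ] HB) (Ω' : HB →ₗᵢ[ℂ] HA)
    (hΩ : ∀ x, Ω (A x) = B (Ω x))
    (hΩ' : ∀ y, Ω' (B y) = A (Ω' y)) :
    ∃ W : HA ≃ₗᵢ[ℂ] HB, ∀ x, W (A x) = B (W x) := by
  classical
  -- pointwise unitary facts
  have hAinner : ∀ x y : HA, ⟪A x, A y⟫_ℂ = ⟪x, y⟫_ℂ := fun x y =>
    ContinuousLinearMap.inner_map_map_of_mem_unitary hAu x y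
  have hAumem := Unitary.mem_iff.mp hAu
  have hBumem := Unitary.mem_iff.mp hBu
  have hA1 : ∀ x, adjoint A (A x) = x := by
    intro x
    have : (star A * A) x = (1 : HA →L[ℂ] HA) x := by rw [hAumem.1]
    simpa [ContinuousLinearMap.mul_apply, ContinuousLinearMap.star_eq_adjoint] using this
  have hA2 : ∀ x, A (adjoint A x) = x := by
    intro x
    have : (A * star A) x = (1 : HA →L[ℂ] HA) x := by rw [hAumem.2]
    simpa [ContinuousLinearMap.mul_apply, ContinuousLinearMap.star_eq_adjoint] using this
  have hB1 : ∀ y, adjoint B (B y) = y := by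
    intro y
    have : (star B * B) y = (1 : HB →L[ℂ] HB) y := by rw [hBumem.1]
    simpa [ContinuousLinearMap.mul_apply, ContinuousLinearMap.star_eq_adjoint] using this
  have hB2 : ∀ y, B (adjoint B y) = y := by
    intro y
    have : (B * star B) y = (1 : HB →L[ℂ] HB) y := by rw [hBumem.2]
    simpa [ContinuousLinearMap.mul_apply, ContinuousLinearMap.star_eq_adjoint] using this
  -- intertwining for adjoints
  have hΩstar : ∀ x, Ω (adjoint A x) = adjoint B (Ω x) := by
    intro x
    have h := hΩ (adjoint A x)
    rw [hA2] at h
    have := congrArg (adjoint B) h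
    rwa [hB1, eq_comm] at this
  have hstarΩ' : ∀ z, Ω' (adjoint B z) = adjoint A (Ω' z) := by
    intro z
    have h := hΩ' (adjoint B z)
    rw [hB2] at h
    have := congrArg (adjoint A) h
    rwa [hA1, eq_comm] at this
  -- the two one-sided shifts
  set S : HA →ₗᵢ[ℂ] HA := Ω'.comp Ω with hS
  set S' : HB →ₗᵢ[ℂ] HB := Ω.comp Ω' with hS'
  have hSapp : ∀ x, S x = Ω' (Ω x) := fun _ => rfl
  have hS'app : ∀ y, S' y = Ω (Ω' y) := fun _ => rfl
  -- conjugation identities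
  have hconj : ∀ n x, Ω (isoPow S n x) = isoPow S' n (Ω x) := by
    intro n
    induction n with
    | zero => intro x; rfl
    | succ n ih =>
      intro x
      rw [isoPow_succ, isoPow_succ, ← ih x]
      rfl
  have hconj' : ∀ n y, Ω' (isoPow S' n y) = isoPow S n (Ω' y) := by
    intro n
    induction n with
    | zero => intro y; rfl
    | succ n ih =>
      intro y
      rw [isoPow_succ, isoPow_succ, ← ih y]
      rfl
  -- commutation of A with S, and adjoint A with S
  have hAS : ∀ x, S (A x) = A (S x) := by
    intro x; rw [hSapp, hSapp, hΩ, hΩ']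
  have hA'S : ∀ x, S (adjoint A x) = adjoint A (S x) := by
    intro x; rw [hSapp, hSapp, hΩstar, hstarΩ']
  have hApow : ∀ n x, isoPow S n (A x) = A (isoPow S n x) := by
    intro n
    induction n with
    | zero => intro x; rfl
    | succ n ih => intro x; rw [isoPow_succ, isoPow_succ, ih, hAS]
  have hA'pow : ∀ n x, isoPow S n (adjoint A x) = adjoint A (isoPow S n x) := by
    intro n
    induction n with
    | zero => intro x; rfl
    | succ n ih => intro x; rw [isoPow_succ, isoPow_succ, ih, hA'S]
  -- the chains of subspaces
  set DA : ℕ → Submodule ℂ HA := fun n => LinearMap.range (isoPow S n).toLinearMap with hDA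
  set GA : ℕ → Submodule ℂ HA :=
    fun n => LinearMap.range ((isoPow S n).comp Ω').toLinearMap with hGA
  set DB : ℕ → Submodule ℂ HB := fun n => LinearMap.range (isoPow S' n).toLinearMap with hDB
  set GB : ℕ → Submodule ℂ HB :=
    fun n => LinearMap.range ((isoPow S' n).comp Ω).toLinearMap with hGB
  have hDAmem : ∀ n x, isoPow S n x ∈ DA n := fun n x => ⟨x, rfl⟩
  have hGAmem : ∀ n z, isoPow S n (Ω' z) ∈ GA n := fun n z => ⟨z, rfl⟩
  have hDBmem : ∀ n y, isoPow S' n y ∈ DB n := fun n y => ⟨y, rfl⟩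
  have hGBmem : ∀ n z, isoPow S' n (Ω z) ∈ GB n := fun n z => ⟨z, rfl⟩
  have hDAex : ∀ n x, x ∈ DA n → ∃ z, isoPow S n z = x := by
    rintro n x ⟨z, rfl⟩; exact ⟨z, rfl⟩
  have hGAex : ∀ n x, x ∈ GA n → ∃ z, isoPow S n (Ω' z) = x := by
    rintro n x ⟨z, rfl⟩; exact ⟨z, rfl⟩
  have hDBex : ∀ n y, y ∈ DB n → ∃ z, isoPow S' n z = y := by
    rintro n y ⟨z, rfl⟩; exact ⟨z, rfl⟩
  have hGBex : ∀ n y, y ∈ GB n → ∃ z, isoPow S' n (Ω z) = y := by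
    rintro n y ⟨z, rfl⟩; exact ⟨z, rfl⟩
  -- closedness
  have hDAc : ∀ n, IsClosed ((DA n : Set HA)) := by
    intro n
    rw [hDA]
    simpa [LinearMap.coe_range] using
      ((isoPow S n).isometry.isClosedEmbedding).isClosed_range
  have hGAc : ∀ n, IsClosed ((GA n : Set HA)) := by
    intro n
    rw [hGA]
    simpa [LinearMap.coe_range] using
      (((isoPow S n).comp Ω').isometry.isClosedEmbedding).isClosed_range
  have hDBc : ∀ n, IsClosed ((DB n : Set HB)) := by
    intro n
    rw [hDB]
    simpa [LinearMap.coe_range] using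
      ((isoPow S' n).isometry.isClosedEmbedding).isClosed_range
  have hGBc : ∀ n, IsClosed ((GB n : Set HB)) := by
    intro n
    rw [hGB]
    simpa [LinearMap.coe_range] using
      (((isoPow S' n).comp Ω).isometry.isClosedEmbedding).isClosed_range
  -- chain inclusions
  have hGDA : ∀ n, GA n ≤ DA n := by
    rintro n x ⟨z, rfl⟩; exact ⟨Ω' z, rfl⟩
  have hDGA : ∀ n, DA (n + 1) ≤ GA n := by
    rintro n x ⟨z, rfl⟩
    refine ⟨Ω z, ?_⟩
    show isoPow S n (Ω' (Ω z)) = isoPow S (n + 1) z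
    rw [← hSapp, isoPow_comm, isoPow_succ]
  have hGDB : ∀ n, GB n ≤ DB n := by
    rintro n y ⟨z, rfl⟩; exact ⟨Ω z, rfl⟩
  have hDGB : ∀ n, DB (n + 1) ≤ GB n := by
    rintro n y ⟨z, rfl⟩
    refine ⟨Ω' z, ?_⟩
    show isoPow S' n (Ω (Ω' z)) = isoPow S' (n + 1) z
    rw [← hS'app, isoPow_comm, isoPow_succ]
  -- antitone
  have hDAanti : ∀ k n, k ≤ n → DA n ≤ DA k := by
    intro k n hkn
    induction hkn with
    | refl => exact le_rfl
    | step h ih => exact le_trans (le_trans (hDGA _) (hGDA _)) ih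
  have hGAanti : ∀ k n, k ≤ n → GA n ≤ GA k := by
    intro k n hkn
    induction hkn with
    | refl => exact le_rfl
    | step h ih => exact le_trans (le_trans (hGDA _) (hDGA _)) ih
  have hGBanti : ∀ k n, k ≤ n → GB n ≤ GB k := by
    intro k n hkn
    induction hkn with
    | refl => exact le_rfl
    | step h ih => exact le_trans (le_trans (hGDB _) (hDGB _)) ih
  -- orthogonality criteria
  have hDAorth : ∀ (n : ℕ) (v : HA), v ∈ (DA n)ᗮ ↔ ∀ t, ⟪isoPow S n t, v⟫_ℂ = 0 := by
    intro n v
    constructor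
    · intro h t
      exact (Submodule.mem_orthogonal _ _).mp h _ ⟨t, rfl⟩
    · intro h
      rw [Submodule.mem_orthogonal]
      rintro d ⟨t, rfl⟩
      exact h t
  have hGAorth : ∀ (n : ℕ) (v : HA), v ∈ (GA n)ᗮ ↔ ∀ t, ⟪isoPow S n (Ω' t), v⟫_ℂ = 0 := by
    intro n v
    constructor
    · intro h t
      exact (Submodule.mem_orthogonal _ _).mp h _ ⟨t, rfl⟩
    · intro h
      rw [Submodule.mem_orthogonal]
      rintro d ⟨t, rfl⟩
      exact h t
  have hDBorth : ∀ (n : ℕ) (v : HB), v ∈ (DB n)ᗮ ↔ ∀ t, ⟪isoPow S' n t, v⟫_ℂ = 0 := by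
    intro n v
    constructor
    · intro h t
      exact (Submodule.mem_orthogonal _ _).mp h _ ⟨t, rfl⟩
    · intro h
      rw [Submodule.mem_orthogonal]
      rintro d ⟨t, rfl⟩
      exact h t
  have hGBorth : ∀ (n : ℕ) (v : HB), v ∈ (GB n)ᗮ ↔ ∀ t, ⟪isoPow S' n (Ω t), v⟫_ℂ = 0 := by
    intro n v
    constructor
    · intro h t
      exact (Submodule.mem_orthogonal _ _).mp h _ ⟨t, rfl⟩
    · intro h
      rw [Submodule.mem_orthogonal]
      rintro d ⟨t, rfl⟩
      exact h t
  -- the subspace N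
  set NA : ℕ → Submodule ℂ HA := fun n => GA n ⊓ (DA (n + 1))ᗮ with hNA
  have hNAmem : ∀ (n : ℕ) (v : HA), v ∈ NA n ↔ v ∈ GA n ∧ v ∈ (DA (n + 1))ᗮ := by
    intro n v; exact Submodule.mem_inf
  set Nsub : Submodule ℂ HA := (⨆ n, NA n).topologicalClosure with hNsub
  have hNc : IsClosed ((Nsub : Set HA)) := Submodule.isClosed_topologicalClosure _
  haveI : CompleteSpace Nsub := hNc.completeSpace_coe
  have hNAle : ∀ n, NA n ≤ Nsub :=
    fun n => le_trans (le_iSup NA n) (Submodule.le_topologicalClosure _)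
  -- a criterion for membership in Nsubᗮ
  have horth : ∀ m : HA, (∀ k, ∀ v, v ∈ NA k → ⟪m, v⟫_ℂ = 0) → m ∈ Nsubᗮ := by
    intro m hm
    have hle : Nsub ≤ (ℂ ∙ m)ᗮ := by
      refine Submodule.topologicalClosure_minimal _ ?_ (Submodule.isClosed_orthogonal _)
      refine iSup_le fun k => ?_
      intro v hv
      exact Submodule.mem_orthogonal_singleton_iff_inner_right.mpr (hm k v hv)
    rw [Submodule.mem_orthogonal']
    intro v hv
    exact Submodule.mem_orthogonal_singleton_iff_inner_right.mp (hle hv)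
  have hNorth : ∀ (m : HA), m ∈ Nsubᗮ → ∀ v, v ∈ Nsub → ⟪m, v⟫_ℂ = 0 := by
    intro m hm v hv
    exact (Submodule.mem_orthogonal' _ _).mp hm v hv
  -- N is contained in the range of Ω'
  have hNG : Nsub ≤ GA 0 := by
    refine Submodule.topologicalClosure_minimal _ ?_ (hGAc 0)
    exact iSup_le fun n => le_trans inf_le_left (hGAanti 0 n (Nat.zero_le n))
  -- S maps Nsubᗮ into Nsubᗮ
  have hSK : ∀ u, u ∈ Nsubᗮ → S u ∈ Nsubᗮ := by
    intro u hu
    refine horth _ ?_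
    intro k v hv
    obtain ⟨hv1, hv2⟩ := (hNAmem k v).mp hv
    match k with
    | 0 =>
      have : S u ∈ DA 1 := ⟨u, rfl⟩
      exact (Submodule.mem_orthogonal _ _).mp hv2 _ this
    | k + 1 =>
      obtain ⟨z, hz⟩ := hGAex _ _ hv1
      have hw : v = S (isoPow S k (Ω' z)) := by rw [← hz, isoPow_succ]
      rw [hw, S.inner_map_map]
      have hwN : isoPow S k (Ω' z) ∈ NA k := by
        refine (hNAmem _ _).mpr ⟨hGAmem k z, ?_⟩
        rw [hDAorth]
        intro t
        have h1 : ⟪isoPow S (k + 1 + 1) t, v⟫_ℂ = 0 := (hDAorth _ _).mp hv2 t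
        rw [hw, isoPow_succ S (k + 1) t, S.inner_map_map] at h1
        exact h1
      exact hNorth u hu _ (hNAle k hwN)
  -- invariance of Nsub under operators commuting with the structure
  have hANA : ∀ (T : HA →L[ℂ] HA) (T2 : HB →L[ℂ] HB), (∀ z, T (Ω' z) = Ω' (T2 z)) →
      (∀ x y : HA, ⟪T x, T y⟫_ℂ = ⟪x, y⟫_ℂ) → Function.Surjective T →
      (∀ n x, isoPow S n (T x) = T (isoPow S n x)) →
      ∀ v, v ∈ Nsub → T v ∈ Nsub := by
    intro T T2 hTΩ' hTinner hTsurj hTpow v hv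
    have hq : Nsub ≤ Submodule.comap (T : HA →ₗ[ℂ] HA) Nsub := by
      refine Submodule.topologicalClosure_minimal _ ?_ ?_
      · refine iSup_le fun n => ?_
        intro w hw
        obtain ⟨hw1, hw2⟩ := (hNAmem n w).mp hw
        refine Submodule.mem_comap.mpr (hNAle n ((hNAmem n _).mpr ⟨?_, ?_⟩))
        · obtain ⟨z, hz⟩ := hGAex _ _ hw1
          refine ⟨T2 z, ?_⟩
          show isoPow S n (Ω' (T2 z)) = T w
          rw [← hTΩ', hTpow, hz]
        · rw [hDAorth]
          intro t
          obtain ⟨t', rfl⟩ := hTsurj t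
          show ⟪isoPow S (n + 1) (T t'), T w⟫_ℂ = 0
          rw [hTpow, hTinner]
          exact (hDAorth _ _).mp hw2 t'
      · exact IsClosed.preimage T.continuous hNc
    exact Submodule.mem_comap.mp (hq hv)
  have hAN : ∀ v, v ∈ Nsub → A v ∈ Nsub := by
    refine hANA A B (fun z => (hΩ' z).symm) hAinner (fun x => ⟨adjoint A x, hA2 x⟩) hApow
  have hA'N : ∀ v, v ∈ Nsub → adjoint A v ∈ Nsub := by
    refine hANA (adjoint A) (adjoint B) (fun z => (hstarΩ' z).symm) ?_
      (fun x => ⟨A x, hA1 x⟩) hA'pow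
    intro x y
    rw [ContinuousLinearMap.adjoint_inner_left, hA2]
  -- A maps Nsubᗮ into Nsubᗮ
  have hAK : ∀ u, u ∈ Nsubᗮ → A u ∈ Nsubᗮ := by
    intro u hu
    refine horth _ ?_
    intro k v hv
    have hv' : v ∈ Nsub := hNAle k hv
    have h1 : A (adjoint A v) = v := hA2 v
    rw [← h1, hAinner]
    exact hNorth u hu _ (hA'N v hv')
  -- the orthogonal projection onto Nsub
  set P : HA →L[ℂ] HA := Nsub.subtypeL.comp (Submodule.orthogonalProjectionOnto Nsub) with hPdef
  have hPapp : ∀ x, P x = (Submodule.orthogonalProjectionOnto Nsub x : HA) := fun x => rfl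
  have hPmem : ∀ x, P x ∈ Nsub := fun x => (Submodule.orthogonalProjectionOnto Nsub x).2
  have hPsub : ∀ x, x - P x ∈ Nsubᗮ := fun x => Submodule.sub_starProjection_mem_orthogonal x
  have hPid : ∀ v, v ∈ Nsub → P v = v := by
    intro v hv
    have h := Submodule.orthogonalProjectionOnto_mem_subspace_eq_self (K := Nsub) ⟨v, hv⟩
    rw [hPapp]
    exact congrArg Subtype.val h
  have hPzero : ∀ u, u ∈ Nsubᗮ → P u = 0 := by
    intro u hu
    rw [hPapp, Submodule.orthogonalProjectionOnto_apply_of_mem_orthogonal hu]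
    rfl
  -- the adjoint of Ω'
  set Ω'cl : HB →L[ℂ] HA := Ω'.toContinuousLinearMap with hΩ'cl
  have hadj1 : ∀ w, adjoint Ω'cl (Ω' w) = w := by
    intro w
    refine ext_inner_right ℂ fun z => ?_
    rw [ContinuousLinearMap.adjoint_inner_left]
    exact Ω'.inner_map_map w z
  have hadjB : ∀ v, adjoint Ω'cl (A v) = B (adjoint Ω'cl v) := by
    intro v
    refine ext_inner_right ℂ fun z => ?_
    rw [ContinuousLinearMap.adjoint_inner_left,
      ← ContinuousLinearMap.adjoint_inner_right B,
      ContinuousLinearMap.adjoint_inner_left]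
    have h1 : Ω'cl ((adjoint B) z) = (adjoint A) (Ω'cl z) := hstarΩ' z
    rw [h1]
    exact (ContinuousLinearMap.adjoint_inner_right A _ _).symm
  -- the candidate unitary
  set W0 : HA →L[ℂ] HB :=
    Ω.toContinuousLinearMap.comp (ContinuousLinearMap.id ℂ HA - P)
      + (adjoint Ω'cl).comp P with hW0def
  have hW0 : ∀ x, W0 x = Ω (x - P x) + adjoint Ω'cl (P x) := fun x => rfl
  have hWK : ∀ u, u ∈ Nsubᗮ → W0 u = Ω u := by
    intro u hu
    rw [hW0, hPzero u hu, sub_zero, map_zero, add_zero]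
  have hWN : ∀ v, v ∈ Nsub → W0 v = adjoint Ω'cl v := by
    intro v hv
    rw [hW0, hPid v hv, sub_self, map_zero, zero_add]
  -- W0 is an isometry
  have hWnorm : ∀ x, ‖W0 x‖ = ‖x‖ := by
    intro x
    have hu : x - P x ∈ Nsubᗮ := hPsub x
    have hv : P x ∈ Nsub := hPmem x
    obtain ⟨w, hw⟩ := hGAex 0 (P x) (hNG hv)
    have hw' : Ω' w = P x := hw
    have hadjv : adjoint Ω'cl (P x) = w := by rw [← hw']; exact hadj1 w
    have hcross : ⟪Ω (x - P x), w⟫_ℂ = 0 := by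
      rw [← Ω'.inner_map_map (Ω (x - P x)) w, hw']
      have h2 : Ω' (Ω (x - P x)) = S (x - P x) := rfl
      rw [h2]
      exact hNorth _ (hSK _ hu) _ hv
    have hWx : W0 x = Ω (x - P x) + w := by rw [hW0 x, hadjv]
    have h1 : ‖Ω (x - P x) + w‖ ^ 2 = ‖Ω (x - P x)‖ ^ 2 + ‖w‖ ^ 2 := by
      have h := norm_add_sq (𝕜 := ℂ) (Ω (x - P x)) w
      rw [hcross] at h
      simpa using h
    have hcross2 : ⟪x - P x, P x⟫_ℂ = 0 := hNorth _ hu _ hv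
    have h2 : ‖x‖ ^ 2 = ‖x - P x‖ ^ 2 + ‖P x‖ ^ 2 := by
      have hxx : x = (x - P x) + P x := by abel
      nth_rewrite 1 [hxx]
      have h := norm_add_sq (𝕜 := ℂ) (x - P x) (P x)
      rw [hcross2] at h
      simpa using h
    have h3 : ‖W0 x‖ ^ 2 = ‖x‖ ^ 2 := by
      rw [hWx, h1, h2, Ω.norm_map, ← hw', Ω'.norm_map]
    exact (sq_eq_sq₀ (norm_nonneg _) (norm_nonneg _)).mp h3
  set Wli : HA →ₗᵢ[ℂ] HB := ⟨(W0 : HA →ₗ[ℂ] HB), hWnorm⟩ with hWli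
  have hWliapp : ∀ x, Wli x = W0 x := fun x => rfl
  -- the range of W0
  set R : Submodule ℂ HB := LinearMap.range (W0 : HA →ₗ[ℂ] HB) with hR
  have hRc : IsClosed ((R : Set HB)) := by
    have hiso : Isometry W0 := AddMonoidHomClass.isometry_of_norm W0 hWnorm
    have h := (hiso.isClosedEmbedding).isClosed_range
    have hset : (R : Set HB) = Set.range ⇑W0 := by
      ext y
      constructor
      · rintro ⟨x, rfl⟩; exact ⟨x, rfl⟩
      · rintro ⟨x, rfl⟩; exact ⟨x, rfl⟩
    rw [hset]; exact h
  haveI : CompleteSpace R := hRc.completeSpace_coe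
  -- the B-side pieces are in the range
  have hMBr : ∀ n m, m ∈ DB n → m ∈ (GB n)ᗮ → m ∈ R := by
    intro n m hm1 hm2
    obtain ⟨t, ht⟩ := hDBex n m hm1
    have hvGA : Ω' m ∈ GA n := by rw [← ht, hconj']; exact hGAmem n t
    have hvNA : Ω' m ∈ NA n := by
      refine (hNAmem _ _).mpr ⟨hvGA, ?_⟩
      rw [hDAorth]
      intro s
      have he : isoPow S (n + 1) s = Ω' (isoPow S' n (Ω s)) := by
        rw [hconj', show Ω' (Ω s) = S s from rfl, isoPow_comm, isoPow_succ]
      rw [he, Ω'.inner_map_map]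
      exact (hGBorth _ _).mp hm2 s
    refine ⟨Ω' m, ?_⟩
    show W0 (Ω' m) = m
    rw [hWN _ (hNAle n hvNA), hadj1]
  have hNBr : ∀ n y, y ∈ GB n → y ∈ (DB (n + 1))ᗮ → y ∈ R := by
    intro n y hy1 hy2
    obtain ⟨z, hz⟩ := hGBex n y hy1
    have hyx : Ω (isoPow S n z) = y := by rw [hconj]; exact hz
    have hxK : isoPow S n z ∈ Nsubᗮ := by
      refine horth _ ?_
      intro k v hv
      obtain ⟨hv1, hv2⟩ := (hNAmem k v).mp hv
      rcases le_or_gt (k + 1) n with hkn | hnk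
      · have hxD : isoPow S n z ∈ DA (k + 1) := hDAanti _ _ hkn (hDAmem n z)
        exact (Submodule.mem_orthogonal _ _).mp hv2 _ hxD
      · have hn : n ≤ k := Nat.lt_succ_iff.mp hnk
        have hvG : v ∈ GA n := hGAanti n k hn hv1
        obtain ⟨t, ht⟩ := hGAex n v hvG
        rw [← ht, ← Ω.inner_map_map (isoPow S n z), hyx, hconj]
        have he : isoPow S' n (Ω (Ω' t)) = isoPow S' (n + 1) t := by
          rw [show Ω (Ω' t) = S' t from rfl, isoPow_comm, isoPow_succ]
        rw [he]
        exact inner_eq_zero_symm.mp ((hDBorth _ _).mp hy2 t)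
    refine ⟨isoPow S n z, ?_⟩
    show W0 (isoPow S n z) = y
    rw [hWK _ hxK, hyx]
  have hIr : ∀ y, (∀ n, y ∈ DB n) → y ∈ R := by
    intro y hy
    obtain ⟨x0, hx0⟩ := hGBex 0 y (hDGB 0 (hy 1))
    have hx0' : Ω x0 = y := hx0
    have hxD : ∀ n, x0 ∈ DA n := by
      intro n
      obtain ⟨z, hz⟩ := hGBex n y (hDGB n (hy (n + 1)))
      have h1 : Ω (isoPow S n z) = y := by rw [hconj]; exact hz
      have hinj : isoPow S n z = x0 := Ω.injective (by rw [h1, hx0'])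
      rw [← hinj]; exact hDAmem n z
    have hxK : x0 ∈ Nsubᗮ := by
      refine horth _ ?_
      intro k v hv
      obtain ⟨hv1, hv2⟩ := (hNAmem k v).mp hv
      exact (Submodule.mem_orthogonal _ _).mp hv2 x0 (hxD (k + 1))
    refine ⟨x0, ?_⟩
    show W0 x0 = y
    rw [hWK _ hxK, hx0']
  -- W0 is surjective
  have hRtop : R = ⊤ := by
    rw [← Submodule.orthogonal_eq_bot_iff]
    refine (Submodule.eq_bot_iff _).mpr fun y hy => ?_
    refine chain_lemma DB GB hDBc hGBc hGDB hDGB y ⟨y, rfl⟩ ?_ ?_ ?_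
    · intro n m hm1 hm2
      exact (Submodule.mem_orthogonal _ _).mp hy m (hMBr n m hm1 hm2)
    · intro n m hm1 hm2
      exact (Submodule.mem_orthogonal _ _).mp hy m (hNBr n m hm1 hm2)
    · intro z hz
      exact (Submodule.mem_orthogonal _ _).mp hy z (hIr z hz)
  have hsurj : Function.Surjective Wli := by
    intro y
    have hyR : y ∈ R := by rw [hRtop]; trivial
    obtain ⟨x, hx⟩ := hyR
    exact ⟨x, hx⟩
  refine ⟨LinearIsometryEquiv.ofSurjective Wli hsurj, ?_⟩
  intro x
  have happ : ∀ z, (LinearIsometryEquiv.ofSurjective Wli hsurj) z = W0 z := by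
    intro z
    rw [LinearIsometryEquiv.coe_ofSurjective]
    exact hWliapp z
  rw [happ, happ]
  -- intertwining
  have hPAx : P (A x) = A (P x) := by
    have h1 : P (A (x - P x)) = 0 := hPzero _ (hAK _ (hPsub x))
    have h2 : P (A (P x)) = A (P x) := hPid _ (hAN _ (hPmem x))
    have h3 : A x = A (x - P x) + A (P x) := by rw [← map_add, sub_add_cancel]
    calc P (A x) = P (A (x - P x)) + P (A (P x)) := by rw [← map_add, ← h3]
    _ = A (P x) := by rw [h1, h2, zero_add]
  calc W0 (A x) = Ω (A x - P (A x)) + adjoint Ω'cl (P (A x)) := hW0 _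
  _ = Ω (A (x - P x)) + adjoint Ω'cl (A (P x)) := by rw [hPAx, ← map_sub]
  _ = B (Ω (x - P x)) + B (adjoint Ω'cl (P x)) := by rw [hΩ, hadjB]
  _ = B (W0 x) := by rw [← map_add, hW0]
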